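/- arXiv:math/0509697 — 6 statements merged into one kernel-verified Lean document; each statement's English description precedes it below -/
import Mathlib

section
/- Let (p_i, q_i) for i ≥ 1 be pairs of coprime positive integers, set Q_k = q_1⋯q_k, and define rationals β_0 = 1, β_1 = p_1/q_1, and recursively β_{i+1} = q_i β_i + (1/Q_i)·(p_{i+1}/q_{i+1}). Then for every k ≥ 1, the greatest common divisor (in the sense of ℤ-divisibility of rationals) of β_0, β_1, …, β_k equals 1/Q_k. -/
/-- The gcd (in the sense of ℤ-divisibility of rationals) of the j-values
`β_0, β_1, …, β_k` equals `1/(q_1 ⋯ q_k)`. -/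
theorem gcd_jvalues (p q : ℕ → ℕ) (β : ℕ → ℚ)
    (hp : ∀ i, 1 ≤ i → 0 < p i) (hq : ∀ i, 1 ≤ i → 0 < q i)
    (hcop : ∀ i, 1 ≤ i → Nat.Coprime (p i) (q i))
    (hβ0 : β 0 = 1) (hβ1 : β 1 = (p 1 : ℚ) / (q 1 : ℚ))
    (hβ : ∀ i, 1 ≤ i →
      β (i + 1) = (q i : ℚ) * β i
        + (1 / ∏ j ∈ Finset.Icc 1 i, (q j : ℚ)) * ((p (i + 1) : ℚ) / (q (i + 1) : ℚ)))
    (k : ℕ) (hk : 1 ≤ k) :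
    IsGreatest {g : ℚ | ∀ j ≤ k, ∃ n : ℤ, β j = (n : ℚ) * g}
      (1 / ∏ j ∈ Finset.Icc 1 k, (q j : ℚ)) := by
  have hqQ : ∀ i, 1 ≤ i → (0:ℚ) < q i := fun i hi => by exact_mod_cast hq i hi
  have hQpos : ∀ m, (0:ℚ) < ∏ j ∈ Finset.Icc 1 m, (q j : ℚ) := fun m =>
    Finset.prod_pos (fun j hj => hqQ j (Finset.mem_Icc.mp hj).1)
  have hQne : ∀ m, (∏ j ∈ Finset.Icc 1 m, (q j : ℚ)) ≠ 0 := fun m => (hQpos m).ne'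
  -- β i = a_i / Q_i
  have hA : ∀ i, 1 ≤ i → ∃ a : ℤ, (∏ j ∈ Finset.Icc 1 i, (q j : ℚ)) * β i = a := by
    intro i hi
    induction i, hi using Nat.le_induction with
    | base =>
        refine ⟨p 1, ?_⟩
        rw [hβ1, Finset.Icc_self, Finset.prod_singleton,
          mul_div_cancel₀ _ (hqQ 1 le_rfl).ne']
        norm_cast
    | succ i hi ih =>
        obtain ⟨a, ha⟩ := ih
        refine ⟨(q (i+1) : ℤ) * (q i : ℤ) * a + (p (i+1) : ℤ), ?_⟩
        rw [Finset.prod_Icc_succ_top (by omega : 1 ≤ i + 1), hβ i hi]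
        have h1 := hQne i
        have h2 := (hqQ (i+1) (by omega)).ne'
        push_cast
        field_simp
        linear_combination ((q i : ℚ) * (q (i+1))) * ha
  constructor
  · -- membership
    intro j hj
    rcases Nat.eq_zero_or_pos j with rfl | hj1
    · refine ⟨∏ i ∈ Finset.Icc 1 k, (q i : ℤ), ?_⟩
      rw [hβ0]
      push_cast
      rw [mul_one_div, div_self (hQne k)]
    · obtain ⟨a, ha⟩ := hA j hj1
      refine ⟨a * ∏ i ∈ Finset.Icc (j+1) k, (q i : ℤ), ?_⟩
      have hsplit : (∏ i ∈ Finset.Icc 1 k, (q i:ℚ))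
          = (∏ i ∈ Finset.Icc 1 j, (q i:ℚ)) * ∏ i ∈ Finset.Icc (j+1) k, (q i:ℚ) := by
        rw [Finset.Icc_add_one_left_eq_Ioc, show (1:ℕ) = 0 + 1 from rfl, Finset.Icc_add_one_left_eq_Ioc, Finset.Icc_add_one_left_eq_Ioc,
          Finset.prod_Ioc_consecutive _ (Nat.zero_le j) hj]
      have hR : (∏ i ∈ Finset.Icc (j+1) k, (q i:ℚ)) ≠ 0 :=
        (Finset.prod_pos (fun i hi => hqQ i (by have := (Finset.mem_Icc.mp hi).1; omega))).ne'
      have hbj : β j = (a:ℚ) / (∏ i ∈ Finset.Icc 1 j, (q i:ℚ)) := by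
        rw [eq_div_iff (hQne j), mul_comm]; exact ha
      rw [hbj, hsplit]
      push_cast
      rw [mul_comm ((a:ℚ)) _, mul_one_div]
      rw [div_eq_div_iff (hQne j) (mul_ne_zero (hQne j) hR)]
      ring
  · -- upper bound
    intro g hg
    obtain ⟨n0, hn0⟩ := hg 0 (Nat.zero_le k)
    rw [hβ0] at hn0
    by_cases hgpos : 0 < g
    · have hn0ne : (n0:ℚ) ≠ 0 := by
        intro h; rw [h, zero_mul] at hn0; exact one_ne_zero hn0
      have hgeq : g = 1 / (n0:ℚ) := by field_simp at hn0 ⊢; linarith [hn0]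
      have hn0pos : (0:ℚ) < n0 := by
        by_contra h
        push_neg at h
        have : (n0:ℚ) * g ≤ 0 := mul_nonpos_of_nonpos_of_nonneg h hgpos.le
        rw [← hn0] at this; linarith
      have hdvd : ∀ m, 1 ≤ m → m ≤ k → (∏ j ∈ Finset.Icc 1 m, (q j : ℤ)) ∣ n0 := by
        intro m hm
        induction m, hm using Nat.le_induction with
        | base =>
            intro h1k
            obtain ⟨n1, hn1⟩ := hg 1 hk
            rw [hβ1, hgeq] at hn1
            rw [Finset.Icc_self, Finset.prod_singleton]
            have hq1 := (hqQ 1 le_rfl).ne'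
            have key : (p 1 : ℚ) * n0 = (q 1 : ℚ) * n1 := by
              field_simp at hn1
              linear_combination hn1
            have keyZ : (p 1 : ℤ) * n0 = (q 1 : ℤ) * n1 := by exact_mod_cast key
            have hc : IsCoprime ((q 1 : ℤ)) ((p 1 : ℤ)) := by
              rw [Int.isCoprime_iff_gcd_eq_one]
              simpa [Int.gcd_natCast_natCast] using (hcop 1 le_rfl).symm
            exact hc.dvd_of_dvd_mul_left ⟨n1, by linarith [keyZ]⟩
        | succ m hm ih =>
            intro hmk
            have hQm := hQne m
            have hqm1 := (hqQ (m+1) (by omega)).ne'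
            obtain ⟨c, hc⟩ := ih (by omega)
            obtain ⟨a, ha⟩ := hA m hm
            obtain ⟨n', hn'⟩ := hg (m+1) hmk
            rw [hβ m hm, hgeq] at hn'
            have hn0c : (n0 : ℚ) = (∏ j ∈ Finset.Icc 1 m, (q j : ℚ)) * c := by
              rw [hc]; push_cast; ring
            have key : (c:ℚ) * p (m+1) = (q (m+1):ℚ) * ((n':ℚ) - q m * c * a) := by
              have hcne : (c:ℚ) ≠ 0 := by
                intro h
                apply hn0ne
                rw [hn0c, h, mul_zero]
              have h1 : ((n0:ℚ)) * ((q m:ℚ) * β m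
                  + (1 / ∏ j ∈ Finset.Icc 1 m, (q j:ℚ)) * ((p (m+1):ℚ) / (q (m+1):ℚ)))
                  = (n':ℚ) := by
                rw [hn']
                field_simp
              rw [hn0c] at h1
              field_simp [hQm, hqm1] at h1
              refine mul_left_cancel₀ hQm ?_
              linear_combination (∏ j ∈ Finset.Icc 1 m, (q j:ℚ)) * h1 - (∏ j ∈ Finset.Icc 1 m, (q j:ℚ)) * (c:ℚ) * (q m:ℚ) * (q (m+1):ℚ) * ha
            have keyZ : (c:ℤ) * p (m+1) = (q (m+1):ℤ) * (n' - q m * c * a) := by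
              exact_mod_cast key
            have hcp : IsCoprime ((q (m+1) : ℤ)) ((p (m+1) : ℤ)) := by
              rw [Int.isCoprime_iff_gcd_eq_one]
              simpa [Int.gcd_natCast_natCast] using (hcop (m+1) (by omega)).symm
            have hdc : (q (m+1) : ℤ) ∣ c :=
              hcp.dvd_of_dvd_mul_left ⟨n' - (q m : ℤ) * c * a, by linarith [keyZ]⟩
            rw [Finset.prod_Icc_succ_top (by omega : 1 ≤ m + 1), hc]
            exact mul_dvd_mul (dvd_refl _) hdc
      have hQn0 : (∏ j ∈ Finset.Icc 1 k, (q j : ℤ)) ∣ n0 := hdvd k hk le_rfl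
      have hQle : (∏ j ∈ Finset.Icc 1 k, (q j : ℚ)) ≤ (n0:ℚ) := by
        have h1 : (0:ℤ) < n0 := by exact_mod_cast hn0pos
        have := Int.le_of_dvd h1 hQn0
        calc (∏ j ∈ Finset.Icc 1 k, (q j : ℚ)) = ((∏ j ∈ Finset.Icc 1 k, (q j : ℤ)) : ℚ) := by
              push_cast; rfl
          _ ≤ (n0:ℚ) := by exact_mod_cast this
      rw [hgeq]
      exact one_div_le_one_div_of_le (hQpos k) hQle
    · push_neg at hgpos
      calc g ≤ 0 := hgpos
        _ ≤ 1 / ∏ j ∈ Finset.Icc 1 k, (q j : ℚ) := by positivity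
end

section
/- With β_0 = 1, β_1 = p_1/q_1, β_{i+1} = q_i β_i + (1/Q_i)·(p_{i+1}/q_{i+1}) where (p_i,q_i) are coprime positive integers and Q_i = q_1⋯q_i, the subgroup of ℚ generated by β_0, β_1, …, β_k equals (1/Q_k)ℤ for every k ≥ 1. -/
open AddSubgroup

lemma coprime_sup (a b : ℤ) (x : ℚ) (h : IsCoprime a b) :
    zmultiples ((a : ℚ) * x) ⊔ zmultiples ((b : ℚ) * x) = zmultiples x := by
  apply le_antisymm
  · apply sup_le <;> rw [zmultiples_le] <;> [exact ⟨a, by simp [zsmul_eq_mul]⟩;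
      exact ⟨b, by simp [zsmul_eq_mul]⟩]
  · rw [zmultiples_le]
    obtain ⟨u, v, huv⟩ := h
    have hx : x = u • ((a : ℚ) * x) + v • ((b : ℚ) * x) := by
      simp only [zsmul_eq_mul]
      have h1 : (u : ℚ) * a + v * b = 1 := by exact_mod_cast huv
      linear_combination (-x) * h1
    have := add_mem (zsmul_mem (mem_sup_left (mem_zmultiples ((a:ℚ)*x))) u)
      (zsmul_mem (mem_sup_right (mem_zmultiples ((b:ℚ)*x))) v)
    rwa [← hx] at this

/-- The subgroup of ℚ generated by the j-values `β_0, …, β_k` equals `(1/Q_k)ℤ`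
where `Q_k = q_1 ⋯ q_k`. -/
theorem subgroup_jvalues (p q : ℕ → ℕ) (β : ℕ → ℚ)
    (hp : ∀ i, 1 ≤ i → 0 < p i) (hq : ∀ i, 1 ≤ i → 0 < q i)
    (hcop : ∀ i, 1 ≤ i → Nat.Coprime (p i) (q i))
    (hβ0 : β 0 = 1) (hβ1 : β 1 = (p 1 : ℚ) / (q 1 : ℚ))
    (hβ : ∀ i, 1 ≤ i →
      β (i + 1) = (q i : ℚ) * β i
        + (1 / ∏ j ∈ Finset.Icc 1 i, (q j : ℚ)) * ((p (i + 1) : ℚ) / (q (i + 1) : ℚ)))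
    (k : ℕ) (hk : 1 ≤ k) :
    (AddSubgroup.closure (β '' {j | j ≤ k}) : Set ℚ)
      = {x : ℚ | ∃ n : ℤ, x = (n : ℚ) * (1 / ∏ j ∈ Finset.Icc 1 k, (q j : ℚ))} := by
  set Q : ℕ → ℚ := fun k => ∏ j ∈ Finset.Icc 1 k, (q j : ℚ) with hQ
  have hQpos : ∀ m, 0 < Q m := fun m => Finset.prod_pos fun j hj => by
    exact_mod_cast hq j (Finset.mem_Icc.mp hj).1
  have key : ∀ m, 1 ≤ m →
      AddSubgroup.closure (β '' {j | j ≤ m}) = zmultiples (1 / Q m) := by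
    intro m hm
    induction m with
    | zero => omega
    | succ n ih =>
      have hQ1 : ∀ r, Q (r + 1) = Q r * (q (r + 1) : ℚ) := fun r => by
        simp only [hQ]
        rw [Finset.prod_Icc_succ_top (Nat.le_add_left 1 r)]
      rcases Nat.lt_or_ge n 1 with hn | hn
      · -- base case: n = 0, m = 1
        interval_cases n
        have hset : {j | j ≤ 1} = ({0, 1} : Set ℕ) := by ext j; simp; omega
        have hq1 : Q 1 = (q 1 : ℚ) := by simp [hQ]
        have hq1ne : (q 1 : ℚ) ≠ 0 := by exact_mod_cast (hq 1 le_rfl).ne'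
        have e0 : β 0 = (((q 1 : ℤ)) : ℚ) * (1 / Q 1) := by
          rw [hβ0, hq1]; push_cast; field_simp
        have e1 : β 1 = (((p 1 : ℤ)) : ℚ) * (1 / Q 1) := by
          rw [hβ1, hq1]; push_cast; field_simp
        rw [hset, Set.image_pair, Set.insert_eq, AddSubgroup.closure_union,
          ← zmultiples_eq_closure, ← zmultiples_eq_closure, e0, e1,
          coprime_sup _ _ _ (Nat.isCoprime_iff_coprime.mpr (hcop 1 le_rfl).symm)]
      · -- inductive step
        have hset : {j | j ≤ n + 1} = insert (n + 1) {j | j ≤ n} := by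
          ext j; simp; omega
        have hih := ih hn
        have hβn : β n ∈ zmultiples (1 / Q n) := by
          rw [← hih]
          exact AddSubgroup.subset_closure ⟨n, by simp, rfl⟩
        obtain ⟨m, hmβ⟩ := mem_zmultiples_iff.mp hβn
        rw [zsmul_eq_mul] at hmβ
        have hQnne : Q n ≠ 0 := (hQpos n).ne'
        have hqn1ne : (q (n + 1) : ℚ) ≠ 0 := by exact_mod_cast (hq (n+1) (by omega)).ne'
        set c : ℤ := (q n : ℤ) * m * (q (n + 1) : ℤ) + (p (n + 1) : ℤ) with hc
        have e1 : β (n + 1) = (c : ℚ) * (1 / Q (n + 1)) := by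
          rw [hβ n hn, ← hmβ, hQ1 n, hc]
          rw [show (∏ j ∈ Finset.Icc 1 n, (q j : ℚ)) = Q n from rfl]
          push_cast
          field_simp
        have e2 : (1 : ℚ) / Q n = (((q (n + 1) : ℤ)) : ℚ) * (1 / Q (n + 1)) := by
          rw [hQ1 n]; push_cast; field_simp
        have hcc : IsCoprime c ((q (n + 1) : ℤ)) := by
          have h := (Nat.isCoprime_iff_coprime.mpr
            (hcop (n + 1) (by omega))).add_mul_left_left ((q n : ℤ) * m)
          have : c = (p (n + 1) : ℤ) + (q (n + 1) : ℤ) * ((q n : ℤ) * m) := by rw [hc]; ring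
          rwa [← this] at h
        rw [hset, Set.image_insert_eq, Set.insert_eq, AddSubgroup.closure_union,
          ← zmultiples_eq_closure, hih, e1, e2, coprime_sup _ _ _ hcc]
  ext x
  rw [key k hk]
  simp only [SetLike.mem_coe, mem_zmultiples_iff, zsmul_eq_mul, Set.mem_setOf_eq]
  exact ⟨fun ⟨n, h⟩ => ⟨n, h.symm⟩, fun ⟨n, h⟩ => ⟨n, h.symm⟩⟩
end

section
/- Let (p_i,q_i), i ≥ 1, be coprime positive integers, Q_k = q_1⋯q_k, and define β_0 = 1, β_{i+1} = q_i β_i + (1/Q_i)(p_{i+1}/q_{i+1}). If x ∈ Γ_k = ⟨β_0,…,β_k⟩ and x ≥ q_k β_k, then there exists a unique representation x = Σ_{j=0}^{k} a_j β_j with integer coefficients satisfying 0 ≤ a_j < q_j for 1 ≤ j ≤ k and a_0 ≥ 0 an arbitrary nonnegative integer. -/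
open Finset

theorem Qpos' (q : ℕ → ℕ) (hq : ∀ i, 1 ≤ i → 0 < q i) (k : ℕ) :
    0 < ∏ j ∈ Finset.Icc 1 k, (q j : ℚ) :=
  Finset.prod_pos fun j hj => by
    have := hq j (Finset.mem_Icc.mp hj).1
    positivity

theorem numer' (p q : ℕ → ℕ) (β : ℕ → ℚ)
    (hq : ∀ i, 1 ≤ i → 0 < q i)
    (hcop : ∀ i, 1 ≤ i → Nat.Coprime (p i) (q i))
    (hβ1 : β 1 = (p 1 : ℚ) / (q 1 : ℚ))
    (hβ : ∀ i, 1 ≤ i →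
      β (i + 1) = (q i : ℚ) * β i
        + (1 / ∏ j ∈ Finset.Icc 1 i, (q j : ℚ)) * ((p (i + 1) : ℚ) / (q (i + 1) : ℚ))) :
    ∀ i, 1 ≤ i → ∃ n : ℤ, β i = (n : ℚ) / (∏ j ∈ Finset.Icc 1 i, (q j : ℚ)) ∧
      IsCoprime n ((q i : ℤ)) := by
  intro i hi
  induction i, hi using Nat.le_induction with
  | base =>
    refine ⟨(p 1 : ℤ), by simp [hβ1], ?_⟩
    rw [Int.isCoprime_iff_gcd_eq_one, Int.gcd_natCast_natCast]
    exact hcop 1 le_rfl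
  | succ i hi ih =>
    obtain ⟨n, hn, hncop⟩ := ih
    have hQ : (0:ℚ) < ∏ j ∈ Finset.Icc 1 i, (q j : ℚ) := Qpos' q hq i
    have hq1 : (0:ℚ) < (q (i+1) : ℚ) := by exact_mod_cast hq (i+1) (by omega)
    refine ⟨(q i : ℤ) * n * (q (i+1) : ℤ) + (p (i+1) : ℤ), ?_, ?_⟩
    · rw [hβ i hi, hn, Finset.prod_Icc_succ_top (by omega : 1 ≤ i + 1)]
      push_cast
      field_simp
    · have : IsCoprime ((p (i+1) : ℤ)) ((q (i+1) : ℤ)) := by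
        rw [Int.isCoprime_iff_gcd_eq_one, Int.gcd_natCast_natCast]
        exact hcop (i+1) (by omega)
      have h2 := this.add_mul_right_left ((q i : ℤ) * n)
      convert h2 using 1
      · rfl
      · ring

theorem memB' (p q : ℕ → ℕ) (β : ℕ → ℚ)
    (hq : ∀ i, 1 ≤ i → 0 < q i)
    (hcop : ∀ i, 1 ≤ i → Nat.Coprime (p i) (q i))
    (hβ0 : β 0 = 1)
    (hβ1 : β 1 = (p 1 : ℚ) / (q 1 : ℚ))
    (hβ : ∀ i, 1 ≤ i →
      β (i + 1) = (q i : ℚ) * β i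
        + (1 / ∏ j ∈ Finset.Icc 1 i, (q j : ℚ)) * ((p (i + 1) : ℚ) / (q (i + 1) : ℚ)))
    (k j : ℕ) (hjk : j ≤ k) :
    ∃ m : ℤ, β j = (m : ℚ) / (∏ l ∈ Finset.Icc 1 k, (q l : ℚ)) := by
  have hQk : (0:ℚ) < ∏ l ∈ Finset.Icc 1 k, (q l : ℚ) := Qpos' q hq k
  rcases Nat.eq_zero_or_pos j with rfl | hj
  · refine ⟨∏ l ∈ Finset.Icc 1 k, (q l : ℤ), ?_⟩
    rw [hβ0]
    push_cast
    field_simp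
  · obtain ⟨n, hn, -⟩ := numer' p q β hq hcop hβ1 hβ j hj
    refine ⟨n * ∏ l ∈ Finset.Icc (j+1) k, (q l : ℤ), ?_⟩
    have hsplit : (∏ l ∈ Finset.Icc 1 k, (q l : ℚ)) =
        (∏ l ∈ Finset.Icc 1 j, (q l : ℚ)) * ∏ l ∈ Finset.Icc (j+1) k, (q l : ℚ) := by
      rw [show Finset.Icc 1 k = Finset.Ioc 0 k from (Finset.Icc_add_one_left_eq_Ioc 0 k).symm,
        show Finset.Icc 1 j = Finset.Ioc 0 j from (Finset.Icc_add_one_left_eq_Ioc 0 j).symm,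
        show Finset.Icc (j+1) k = Finset.Ioc j k from Finset.Icc_add_one_left_eq_Ioc j k,
        Finset.prod_Ioc_consecutive _ (Nat.zero_le j) hjk]
    have hQj : (0:ℚ) < ∏ l ∈ Finset.Icc 1 j, (q l : ℚ) := Qpos' q hq j
    have hP : (0:ℚ) < ∏ l ∈ Finset.Icc (j+1) k, (q l : ℚ) := Finset.prod_pos fun l hl => by
      have := hq l (by have := (Finset.mem_Icc.mp hl).1; omega)
      positivity
    rw [hn, hsplit]
    push_cast
    rw [mul_div_mul_right _ _ (ne_of_gt hP)]

theorem sumB' (p q : ℕ → ℕ) (β : ℕ → ℚ)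
    (hq : ∀ i, 1 ≤ i → 0 < q i)
    (hcop : ∀ i, 1 ≤ i → Nat.Coprime (p i) (q i))
    (hβ0 : β 0 = 1)
    (hβ1 : β 1 = (p 1 : ℚ) / (q 1 : ℚ))
    (hβ : ∀ i, 1 ≤ i →
      β (i + 1) = (q i : ℚ) * β i
        + (1 / ∏ j ∈ Finset.Icc 1 i, (q j : ℚ)) * ((p (i + 1) : ℚ) / (q (i + 1) : ℚ)))
    (k : ℕ) (d : ℕ → ℤ) :
    ∃ s : ℤ, ∑ j ∈ Finset.range (k+1), (d j : ℚ) * β j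
      = (s : ℚ) / (∏ l ∈ Finset.Icc 1 k, (q l : ℚ)) := by
  have h : ∀ j ∈ Finset.range (k+1), ∃ m : ℤ,
      (d j : ℚ) * β j = (m : ℚ) / (∏ l ∈ Finset.Icc 1 k, (q l : ℚ)) := by
    intro j hj
    obtain ⟨m, hm⟩ := memB' p q β hq hcop hβ0 hβ1 hβ k j (by
      have := Finset.mem_range.mp hj; omega)
    exact ⟨d j * m, by rw [hm]; push_cast; ring⟩
  choose m hm using h
  refine ⟨∑ j ∈ (Finset.range (k+1)).attach, m j.1 j.2, ?_⟩
  rw [← Finset.sum_attach (Finset.range (k+1)) (fun j => (d j : ℚ) * β j)]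
  push_cast
  rw [Finset.sum_div]
  exact Finset.sum_congr rfl fun j _ => hm j.1 j.2

theorem zeroC' (p q : ℕ → ℕ) (β : ℕ → ℚ)
    (hq : ∀ i, 1 ≤ i → 0 < q i)
    (hcop : ∀ i, 1 ≤ i → Nat.Coprime (p i) (q i))
    (hβ0 : β 0 = 1)
    (hβ1 : β 1 = (p 1 : ℚ) / (q 1 : ℚ))
    (hβ : ∀ i, 1 ≤ i →
      β (i + 1) = (q i : ℚ) * β i
        + (1 / ∏ j ∈ Finset.Icc 1 i, (q j : ℚ)) * ((p (i + 1) : ℚ) / (q (i + 1) : ℚ))) :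
    ∀ k, ∀ d : ℕ → ℤ, (∀ j, 1 ≤ j → j ≤ k → |d j| < (q j : ℤ)) →
      (∑ j ∈ Finset.range (k+1), (d j : ℚ) * β j) = 0 → ∀ j ≤ k, d j = 0 := by
  intro k
  induction k with
  | zero =>
    intro d _ hsum j hj
    interval_cases j
    simp [hβ0] at hsum
    exact_mod_cast hsum
  | succ k ih =>
    intro d hbd hsum j hj
    -- first show d (k+1) = 0
    obtain ⟨n, hn, hncop⟩ := numer' p q β hq hcop hβ1 hβ (k+1) (by omega)
    obtain ⟨s, hs⟩ := sumB' p q β hq hcop hβ0 hβ1 hβ k d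
    rw [Finset.sum_range_succ, hs, hn] at hsum
    have hQk : (0:ℚ) < ∏ l ∈ Finset.Icc 1 k, (q l : ℚ) := Qpos' q hq k
    have hsplit : (∏ l ∈ Finset.Icc 1 (k+1), (q l : ℚ))
        = (∏ l ∈ Finset.Icc 1 k, (q l : ℚ)) * (q (k+1) : ℚ) := by
      rw [Finset.prod_Icc_succ_top (by omega : 1 ≤ k + 1)]
    have hq1 : (0:ℚ) < (q (k+1) : ℚ) := by exact_mod_cast hq (k+1) (by omega)
    rw [hsplit] at hsum
    have key3 : ((s : ℚ) * (q (k+1) : ℚ) + (d (k+1) : ℚ) * n)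
        * (∏ l ∈ Finset.Icc 1 k, (q l : ℚ)) = 0 := by
      field_simp at hsum
      linear_combination (∏ l ∈ Finset.Icc 1 k, (q l : ℚ)) * hsum
    have key : (s : ℚ) * (q (k+1) : ℚ) + (d (k+1) : ℚ) * n = 0 := by
      rcases mul_eq_zero.mp key3 with h | h
      · exact h
      · exact absurd h (ne_of_gt hQk)
    have keyZ : s * (q (k+1) : ℤ) + d (k+1) * n = 0 := by exact_mod_cast key
    have hdvd : (q (k+1) : ℤ) ∣ d (k+1) * n := ⟨-s, by linarith⟩
    have hdvd2 : (q (k+1) : ℤ) ∣ d (k+1) := hncop.symm.dvd_of_dvd_mul_right hdvd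
    have hdk : d (k+1) = 0 :=
      Int.eq_zero_of_abs_lt_dvd hdvd2 (hbd (k+1) (by omega) le_rfl)
    rcases Nat.lt_or_ge j (k+1) with h | h
    · have hs0 : s = 0 := by
        rw [hdk] at keyZ
        have h2 : s * (q (k+1) : ℤ) = 0 := by linarith
        rcases mul_eq_zero.mp h2 with h3 | h3
        · exact h3
        · exfalso
          have := hq (k+1) (by omega)
          omega
      have hsum' : (∑ j ∈ Finset.range (k+1), (d j : ℚ) * β j) = 0 := by
        rw [hs, hs0]
        simp
      exact ih d (fun j h1 h2 => hbd j h1 (by omega)) hsum' j (by omega)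
    · have : j = k + 1 := by omega
      rw [this]; exact hdk

theorem βpos' (p q : ℕ → ℕ) (β : ℕ → ℚ)
    (hp : ∀ i, 1 ≤ i → 0 < p i) (hq : ∀ i, 1 ≤ i → 0 < q i)
    (hβ0 : β 0 = 1) (hβ1 : β 1 = (p 1 : ℚ) / (q 1 : ℚ))
    (hβ : ∀ i, 1 ≤ i →
      β (i + 1) = (q i : ℚ) * β i
        + (1 / ∏ j ∈ Finset.Icc 1 i, (q j : ℚ)) * ((p (i + 1) : ℚ) / (q (i + 1) : ℚ))) :
    ∀ i, 0 < β i := by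
  have h1 : ∀ i, 1 ≤ i → 0 < β i := by
    intro i hi
    induction i, hi using Nat.le_induction with
    | base =>
      rw [hβ1]
      have h1 := hp 1 le_rfl
      have h2 := hq 1 le_rfl
      positivity
    | succ i hi ih =>
      rw [hβ i hi]
      have hQ := Qpos' q hq i
      have hpi : (0:ℚ) < (p (i+1) : ℚ) := by exact_mod_cast hp (i+1) (by omega)
      have hqi : (0:ℚ) < (q (i+1) : ℚ) := by exact_mod_cast hq (i+1) (by omega)
      have hqi0 : (0:ℚ) < (q i : ℚ) := by exact_mod_cast hq i hi
      have : (0:ℚ) < (q i : ℚ) * β i := mul_pos hqi0 ih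
      positivity
  intro i
  cases i with
  | zero => rw [hβ0]; norm_num
  | succ n => exact h1 (n+1) (by omega)

theorem existsRep' (p q : ℕ → ℕ) (β : ℕ → ℚ)
    (hp : ∀ i, 1 ≤ i → 0 < p i) (hq : ∀ i, 1 ≤ i → 0 < q i)
    (hcop : ∀ i, 1 ≤ i → Nat.Coprime (p i) (q i))
    (hβ0 : β 0 = 1) (hβ1 : β 1 = (p 1 : ℚ) / (q 1 : ℚ))
    (hβ : ∀ i, 1 ≤ i →
      β (i + 1) = (q i : ℚ) * β i
        + (1 / ∏ j ∈ Finset.Icc 1 i, (q j : ℚ)) * ((p (i + 1) : ℚ) / (q (i + 1) : ℚ))) :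
    ∀ k, ∀ m : ℤ, 0 < (m : ℚ) / (∏ l ∈ Finset.Icc 1 k, (q l : ℚ)) →
      (1 ≤ k → (q k : ℚ) * β k ≤ (m : ℚ) / (∏ l ∈ Finset.Icc 1 k, (q l : ℚ))) →
      ∃ a : ℕ → ℤ, (∀ j, 0 ≤ a j) ∧ (∀ j, 1 ≤ j → j ≤ k → a j < (q j : ℤ)) ∧
        (m : ℚ) / (∏ l ∈ Finset.Icc 1 k, (q l : ℚ))
          = ∑ j ∈ Finset.range (k+1), (a j : ℚ) * β j := by
  intro k
  induction k with
  | zero =>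
    intro m hpos _
    simp only [show Finset.Icc 1 0 = (∅ : Finset ℕ) by rfl, Finset.prod_empty, div_one] at hpos ⊢
    refine ⟨fun j => if j = 0 then m else 0, ?_, ?_, ?_⟩
    · intro j
      by_cases h : j = 0
      · simp [h]
        exact_mod_cast le_of_lt hpos
      · simp [h]
    · intro j h1 h2; omega
    · simp [hβ0]
  | succ k ih =>
    intro m hpos hge
    have hge' := hge (by omega)
    have hQk : (0:ℚ) < ∏ l ∈ Finset.Icc 1 k, (q l : ℚ) := Qpos' q hq k
    have hQk1 : (0:ℚ) < ∏ l ∈ Finset.Icc 1 (k+1), (q l : ℚ) := Qpos' q hq (k+1)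
    have hsplit : (∏ l ∈ Finset.Icc 1 (k+1), (q l : ℚ))
        = (∏ l ∈ Finset.Icc 1 k, (q l : ℚ)) * (q (k+1) : ℚ) := by
      rw [Finset.prod_Icc_succ_top (by omega : 1 ≤ k + 1)]
    have hq1 : (0:ℚ) < (q (k+1) : ℚ) := by exact_mod_cast hq (k+1) (by omega)
    have hqZ : (0:ℤ) < (q (k+1) : ℤ) := by exact_mod_cast hq (k+1) (by omega)
    obtain ⟨n, hn, hncop⟩ := numer' p q β hq hcop hβ1 hβ (k+1) (by omega)
    obtain ⟨u, v, huv⟩ := hncop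
    set a : ℤ := (m * u) % (q (k+1) : ℤ) with ha_def
    have ha0 : 0 ≤ a := Int.emod_nonneg _ (ne_of_gt hqZ)
    have ha1 : a < (q (k+1) : ℤ) := Int.emod_lt_of_pos _ hqZ
    have hdvd : (q (k+1) : ℤ) ∣ (m - a * n) := by
      refine ⟨m * v + ((m * u) / (q (k+1) : ℤ)) * n, ?_⟩
      rw [ha_def, Int.emod_def]
      linear_combination (-m) * huv
    set m' : ℤ := (m - a * n) / (q (k+1) : ℤ) with hm'_def
    have hm' : m - a * n = (q (k+1) : ℤ) * m' := (Int.mul_ediv_cancel' hdvd).symm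
    have hmQ : (m:ℚ) - (a:ℚ) * (n:ℚ) = (q (k+1) : ℚ) * (m':ℚ) := by exact_mod_cast hm'
    have hx' : (m':ℚ) / (∏ l ∈ Finset.Icc 1 k, (q l : ℚ))
        = (m:ℚ) / (∏ l ∈ Finset.Icc 1 (k+1), (q l : ℚ)) - (a:ℚ) * β (k+1) := by
      rw [hn, hsplit]
      field_simp
      linear_combination (-1 : ℚ) * hmQ
    have hβk1 : 0 < β (k+1) := βpos' p q β hp hq hβ0 hβ1 hβ (k+1)
    have haq : (a:ℚ) ≤ (q (k+1):ℚ) - 1 := by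
      have : a ≤ (q (k+1) : ℤ) - 1 := by omega
      exact_mod_cast this
    have h1 : β (k+1) ≤ (m':ℚ) / (∏ l ∈ Finset.Icc 1 k, (q l : ℚ)) := by
      rw [hx']
      nlinarith [hge', hβk1]
    have hpos' : 0 < (m':ℚ) / (∏ l ∈ Finset.Icc 1 k, (q l : ℚ)) :=
      lt_of_lt_of_le hβk1 h1
    have hge2 : 1 ≤ k → (q k : ℚ) * β k ≤ (m':ℚ) / (∏ l ∈ Finset.Icc 1 k, (q l : ℚ)) := by
      intro hk1
      have h2 : (q k : ℚ) * β k < β (k+1) := by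
        rw [hβ k hk1]
        have hpk : (0:ℚ) < (p (k+1) : ℚ) := by exact_mod_cast hp (k+1) (by omega)
        have : (0:ℚ) < (1 / ∏ j ∈ Finset.Icc 1 k, (q j : ℚ)) * ((p (k + 1) : ℚ) / (q (k + 1) : ℚ)) := by
          positivity
        linarith
      exact le_trans (le_of_lt h2) h1
    obtain ⟨a', ha'0, ha'1, ha'2⟩ := ih m' hpos' hge2
    refine ⟨fun j => if j = k+1 then a else a' j, ?_, ?_, ?_⟩
    · intro j
      by_cases h : j = k+1 <;> simp [h]
      exacts [ha0, ha'0 j]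
    · intro j hj1 hj2
      by_cases h : j = k+1 <;> simp [h]
      exacts [ha1, ha'1 j hj1 (by omega)]
    · rw [Finset.sum_range_succ]
      have hrw : ∑ j ∈ Finset.range (k+1),
          ((if j = k+1 then a else a' j : ℤ) : ℚ) * β j
          = ∑ j ∈ Finset.range (k+1), (a' j : ℚ) * β j := by
        refine Finset.sum_congr rfl fun j hj => ?_
        have : j ≠ k+1 := by have := Finset.mem_range.mp hj; omega
        simp [this]
      rw [hrw, ← ha'2]
      have hb : (fun j => if j = k + 1 then a else a' j) (k + 1) = a := by simp
      rw [hb, hx']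
      ring

/-- Unique representation: if `x ∈ Γ_k = ⟨β_0, …, β_k⟩` and `x ≥ q_k β_k`, there is a
unique tuple of integers `a_0, …, a_k` with `a_j ≥ 0`, `a_j < q_j` for `1 ≤ j ≤ k`,
and `x = Σ a_j β_j`. -/
theorem unique_representation (p q : ℕ → ℕ) (β : ℕ → ℚ)
    (hp : ∀ i, 1 ≤ i → 0 < p i) (hq : ∀ i, 1 ≤ i → 0 < q i)
    (hcop : ∀ i, 1 ≤ i → Nat.Coprime (p i) (q i))
    (hβ0 : β 0 = 1) (hβ1 : β 1 = (p 1 : ℚ) / (q 1 : ℚ))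
    (hβ : ∀ i, 1 ≤ i →
      β (i + 1) = (q i : ℚ) * β i
        + (1 / ∏ j ∈ Finset.Icc 1 i, (q j : ℚ)) * ((p (i + 1) : ℚ) / (q (i + 1) : ℚ)))
    (k : ℕ) (hk : 1 ≤ k)
    (x : ℚ) (hx : x ∈ AddSubgroup.closure (β '' {j | j ≤ k}))
    (hxge : (q k : ℚ) * β k ≤ x) :
    ∃! a : Fin (k + 1) → ℤ,
      (∀ j, 0 ≤ a j) ∧
      (∀ j : Fin (k + 1), 1 ≤ (j : ℕ) → a j < (q (j : ℕ) : ℤ)) ∧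
      x = ∑ j : Fin (k + 1), (a j : ℚ) * β (j : ℕ) := by
  have hQk : (0:ℚ) < ∏ l ∈ Finset.Icc 1 k, (q l : ℚ) := Qpos' q hq k
  -- x is of the form m / Q_k
  have hxform : ∃ m : ℤ, x = (m : ℚ) / (∏ l ∈ Finset.Icc 1 k, (q l : ℚ)) := by
    let G : AddSubgroup ℚ :=
      { carrier := {y | ∃ m : ℤ, y = (m : ℚ) / (∏ l ∈ Finset.Icc 1 k, (q l : ℚ))}
        zero_mem' := ⟨0, by simp⟩
        add_mem' := by
          rintro y z ⟨m1, rfl⟩ ⟨m2, rfl⟩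
          exact ⟨m1 + m2, by push_cast; rw [← add_div]⟩
        neg_mem' := by
          rintro y ⟨m1, rfl⟩
          exact ⟨-m1, by push_cast; rw [neg_div]⟩ }
    have hle : AddSubgroup.closure (β '' {j | j ≤ k}) ≤ G := by
      rw [AddSubgroup.closure_le]
      rintro y ⟨j, hj, rfl⟩
      exact memB' p q β hq hcop hβ0 hβ1 hβ k j hj
    exact hle hx
  obtain ⟨m, hm⟩ := hxform
  have hβk : 0 < β k := βpos' p q β hp hq hβ0 hβ1 hβ k
  have hqk : (0:ℚ) < (q k : ℚ) := by exact_mod_cast hq k hk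
  have hxpos : 0 < (m : ℚ) / (∏ l ∈ Finset.Icc 1 k, (q l : ℚ)) := by
    rw [← hm]; exact lt_of_lt_of_le (mul_pos hqk hβk) hxge
  obtain ⟨a, ha0, ha1, ha2⟩ := existsRep' p q β hp hq hcop hβ0 hβ1 hβ k m hxpos
    (fun _ => by rw [← hm]; exact hxge)
  set A : Fin (k + 1) → ℤ := fun j => a j.val with hA_def
  have hA2 : x = ∑ j : Fin (k + 1), (A j : ℚ) * β (j : ℕ) := by
    rw [Fin.sum_univ_eq_sum_range (fun j => (a j : ℚ) * β j) (k+1), hm]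
    exact ha2
  refine ⟨A, ⟨fun j => ha0 j.val, fun j hj => ha1 j.val hj (by omega), hA2⟩, ?_⟩
  rintro b ⟨hb0, hb1, hb2⟩
  set d : ℕ → ℤ := fun j => if h : j < k + 1 then b ⟨j, h⟩ - A ⟨j, h⟩ else 0 with hd_def
  have hd_val : ∀ (j : ℕ) (h : j < k + 1), d j = b ⟨j, h⟩ - A ⟨j, h⟩ := by
    intro j h
    simp only [hd_def]
    rw [dif_pos h]
  have hbd : ∀ j, 1 ≤ j → j ≤ k → |d j| < (q j : ℤ) := by
    intro j h1 h2
    have hlt : j < k + 1 := by omega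
    rw [hd_val j hlt]
    have e1 := hb0 ⟨j, hlt⟩
    have e2 : b ⟨j, hlt⟩ < (q j : ℤ) := hb1 ⟨j, hlt⟩ h1
    have e3 := ha0 j
    have e4 := ha1 j h1 h2
    have e5 : A ⟨j, hlt⟩ = a j := rfl
    rw [abs_lt]
    constructor <;> omega
  have hsum : ∑ j ∈ Finset.range (k+1), (d j : ℚ) * β j = 0 := by
    rw [← Fin.sum_univ_eq_sum_range (fun j => (d j : ℚ) * β j) (k+1)]
    have hterm : ∀ j : Fin (k+1), (d j.val : ℚ) * β j.val
        = (b j : ℚ) * β j.val - (A j : ℚ) * β j.val := by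
      intro j
      rw [hd_val j.val j.isLt, Fin.eta]
      push_cast
      ring
    rw [Finset.sum_congr rfl fun j _ => hterm j, Finset.sum_sub_distrib, ← hb2, ← hA2,
      sub_self]
  have hzero := zeroC' p q β hq hcop hβ0 hβ1 hβ k d hbd hsum
  funext j
  have h := hzero j.val (by omega)
  rw [hd_val j.val j.isLt, Fin.eta] at h
  omega
end

section
/- With β_j defined as above (β_0 = 1, β_{i+1} = q_i β_i + (1/Q_i)(p_{i+1}/q_{i+1}), (p_i,q_i) coprime positive), if Σ_{j=0}^{k} c_j β_j = 0 for integers c_j with |c_j| < q_j for 1 ≤ j ≤ k and c_0 ∈ ℤ arbitrary, then c_j = 0 for all j = 0, 1, …, k. -/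
private def NN (p q : ℕ → ℕ) : ℕ → ℤ
  | 0 => 1
  | 1 => (p 1 : ℤ)
  | (i+2) => (q (i+2) : ℤ) * (q (i+1) : ℤ) * NN p q (i+1) + (p (i+2) : ℤ)

private lemma betaEq (p q : ℕ → ℕ) (β : ℕ → ℚ)
    (hq : ∀ i, 1 ≤ i → 0 < q i)
    (hβ0 : β 0 = 1) (hβ1 : β 1 = (p 1 : ℚ) / (q 1 : ℚ))
    (hβ : ∀ i, 1 ≤ i →
      β (i + 1) = (q i : ℚ) * β i
        + (1 / ∏ j ∈ Finset.Icc 1 i, (q j : ℚ)) * ((p (i + 1) : ℚ) / (q (i + 1) : ℚ))) :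
    ∀ i, β i * ∏ j ∈ Finset.Icc 1 i, (q j : ℚ) = (NN p q i : ℚ) := by
  have hqne : ∀ i, 1 ≤ i → (q i : ℚ) ≠ 0 := fun i hi => by
    exact_mod_cast (hq i hi).ne'
  have hQne : ∀ i, (∏ j ∈ Finset.Icc 1 i, (q j : ℚ)) ≠ 0 := fun i => by
    refine Finset.prod_ne_zero_iff.mpr fun j hj => hqne j (Finset.mem_Icc.mp hj).1
  intro i
  induction i with
  | zero => simp [hβ0, NN]
  | succ n ihn =>
    match n, ihn with
    | 0, _ => simp [hβ1, NN, div_mul_cancel₀ _ (hqne 1 le_rfl)]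
    | (m+1), ihn =>
      have h1 : (q (m+2) : ℚ) ≠ 0 := hqne _ (by omega)
      have h2 := hQne (m+1)
      rw [hβ (m+1) (by omega), NN]
      rw [Finset.prod_Icc_succ_top (by omega : 1 ≤ m + 2)]
      push_cast
      rw [add_mul, mul_assoc, ← mul_assoc (β (m+1)), ihn]
      field_simp

private lemma NNcop (p q : ℕ → ℕ)
    (hcop : ∀ i, 1 ≤ i → Nat.Coprime (p i) (q i)) :
    ∀ i, 1 ≤ i → IsCoprime (NN p q i) (q i : ℤ) := by
  intro i hi
  match i, hi with
  | 1, _ =>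
    show IsCoprime ((p 1 : ℤ)) _
    exact_mod_cast (Nat.isCoprime_iff_coprime.mpr (hcop 1 le_rfl))
  | (m+2), _ =>
    have h : IsCoprime ((p (m+2) : ℤ)) ((q (m+2) : ℤ)) :=
      Nat.isCoprime_iff_coprime.mpr (hcop (m+2) (by omega))
    show IsCoprime ((q (m+2) : ℤ) * (q (m+1) : ℤ) * NN p q (m+1) + (p (m+2) : ℤ)) _
    have := h.add_mul_left_left ((q (m+1) : ℤ) * NN p q (m+1))
    convert this using 1
    · rfl
    · ring

/-- Linear independence: if `Σ_{j=0}^{k} c_j β_j = 0` with integers `c_j` satisfying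
`|c_j| < q_j` for `1 ≤ j ≤ k`, then all `c_j = 0`. -/
theorem jvalues_linear_independence (p q : ℕ → ℕ) (β : ℕ → ℚ)
    (hp : ∀ i, 1 ≤ i → 0 < p i) (hq : ∀ i, 1 ≤ i → 0 < q i)
    (hcop : ∀ i, 1 ≤ i → Nat.Coprime (p i) (q i))
    (hβ0 : β 0 = 1) (hβ1 : β 1 = (p 1 : ℚ) / (q 1 : ℚ))
    (hβ : ∀ i, 1 ≤ i →
      β (i + 1) = (q i : ℚ) * β i
        + (1 / ∏ j ∈ Finset.Icc 1 i, (q j : ℚ)) * ((p (i + 1) : ℚ) / (q (i + 1) : ℚ)))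
    (k : ℕ) (c : Fin (k + 1) → ℤ)
    (hc : ∀ j : Fin (k + 1), 1 ≤ (j : ℕ) → |c j| < (q (j : ℕ) : ℤ))
    (hsum : ∑ j : Fin (k + 1), (c j : ℚ) * β (j : ℕ) = 0) :
    ∀ j, c j = 0 := by
  have hqne : ∀ i, 1 ≤ i → (q i : ℚ) ≠ 0 := fun i hi => by
    exact_mod_cast (hq i hi).ne'
  have hbe := betaEq p q β hq hβ0 hβ1 hβ
  induction k with
  | zero =>
    intro j
    have hj : j = 0 := Fin.ext (by omega)
    subst hj
    simp [Fin.sum_univ_one, hβ0] at hsum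
    exact_mod_cast hsum
  | succ k ih =>
    -- product split
    have hQS : ∀ j : ℕ, j ≤ k + 1 →
        (∏ m ∈ Finset.Icc 1 j, (q m : ℚ)) * (∏ m ∈ Finset.Ioc j (k+1), (q m : ℚ))
          = ∏ m ∈ Finset.Icc 1 (k+1), (q m : ℚ) := by
      intro j hj
      have hIcc : ∀ n : ℕ, Finset.Icc 1 n = Finset.Ioc 0 n := fun n => by
        ext x; simp [Nat.lt_iff_add_one_le]
      rw [hIcc j, hIcc (k+1)]
      exact Finset.prod_Ioc_consecutive _ (Nat.zero_le j) hj
    have key : ∀ j : Fin (k+2),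
        (c j : ℚ) * (NN p q (j : ℕ) : ℚ) * ∏ m ∈ Finset.Ioc (j : ℕ) (k+1), (q m : ℚ)
          = ((c j : ℚ) * β (j : ℕ)) * ∏ m ∈ Finset.Icc 1 (k+1), (q m : ℚ) := by
      intro j
      rw [← hQS j (by omega), ← hbe j]
      ring
    have hT : ∑ j : Fin (k+2),
        c j * NN p q (j : ℕ) * ∏ m ∈ Finset.Ioc (j : ℕ) (k+1), (q m : ℤ) = 0 := by
      have : ((∑ j : Fin (k+2),
          c j * NN p q (j : ℕ) * ∏ m ∈ Finset.Ioc (j : ℕ) (k+1), (q m : ℤ) : ℤ) : ℚ) = 0 := by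
        push_cast
        calc (∑ j : Fin (k+2),
            (c j : ℚ) * (NN p q (j : ℕ) : ℚ) * ∏ m ∈ Finset.Ioc (j : ℕ) (k+1), (q m : ℚ))
            = ∑ j : Fin (k+2), ((c j : ℚ) * β (j : ℕ)) * ∏ m ∈ Finset.Icc 1 (k+1), (q m : ℚ) := by
              exact Finset.sum_congr rfl fun j _ => key j
          _ = (∑ j : Fin (k+2), (c j : ℚ) * β (j : ℕ)) * ∏ m ∈ Finset.Icc 1 (k+1), (q m : ℚ) := by
              rw [Finset.sum_mul]
          _ = 0 := by rw [hsum, zero_mul]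
      exact_mod_cast this
    rw [Fin.sum_univ_castSucc] at hT
    have hlastval : ((Fin.last (k+1) : Fin (k+2)) : ℕ) = k + 1 := rfl
    have hlastterm : c (Fin.last (k+1)) * NN p q (k+1)
        * ∏ m ∈ Finset.Ioc (k+1) (k+1), (q m : ℤ)
        = c (Fin.last (k+1)) * NN p q (k+1) := by simp
    rw [hlastval, hlastterm] at hT
    have hrest : (q (k+1) : ℤ) ∣ ∑ j : Fin (k+1),
        c (Fin.castSucc j) * NN p q ((Fin.castSucc j : Fin (k+2)) : ℕ)
          * ∏ m ∈ Finset.Ioc ((Fin.castSucc j : Fin (k+2)) : ℕ) (k+1), (q m : ℤ) := by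
      refine Finset.dvd_sum fun j _ => ?_
      exact dvd_mul_of_dvd_right (Finset.dvd_prod_of_mem _
        (Finset.mem_Ioc.mpr ⟨by simpa using j.is_lt, le_rfl⟩)) _
    have hdvd : (q (k+1) : ℤ) ∣ c (Fin.last (k+1)) * NN p q (k+1) := by
      have : c (Fin.last (k+1)) * NN p q (k+1) = -(∑ j : Fin (k+1),
        c (Fin.castSucc j) * NN p q ((Fin.castSucc j : Fin (k+2)) : ℕ)
          * ∏ m ∈ Finset.Ioc ((Fin.castSucc j : Fin (k+2)) : ℕ) (k+1), (q m : ℤ)) := by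
        linarith
      rw [this]
      exact dvd_neg.mpr hrest
    have hcopN := NNcop p q hcop (k+1) (by omega)
    have hdvdc : (q (k+1) : ℤ) ∣ c (Fin.last (k+1)) :=
      (hcopN.symm).dvd_of_dvd_mul_right hdvd
    have hclast : c (Fin.last (k+1)) = 0 :=
      Int.eq_zero_of_abs_lt_dvd hdvdc (hc (Fin.last (k+1)) (by simp [hlastval]))
    -- reduce the sum
    rw [Fin.sum_univ_castSucc, hlastval, hclast] at hsum
    simp only [Int.cast_zero, zero_mul, add_zero] at hsum
    have ih' := ih (fun j => c (Fin.castSucc j))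
      (fun j hj => hc (Fin.castSucc j) (by simpa using hj)) hsum
    intro j
    rcases Fin.eq_castSucc_or_eq_last j with ⟨i, rfl⟩ | rfl
    · exact ih' i
    · exact hclast
end

section
/- Let ν be a valuation with values in ℚ, and let x, y satisfy ν(y)/ν(x) = p/q with p, q coprime positive integers. Let a, b be nonnegative integers with aq − bp = 1, a ≤ p, b < q, and set X = x^a/y^b. Then ν(X) = (1/q)·ν(x), and (1/q)·ν(x) is the greatest rational g such that both ν(x) and ν(y) are integer multiples of g. -/
/-- If `ν(y)/ν(x) = p/q` with `p, q` coprime positive and `aq − bp = 1`,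
`a ≤ p`, `b < q`, then `ν(x^a/y^b) = (1/q)·ν(x)`, and `(1/q)·ν(x)` is the
greatest rational `g` such that both `ν(x)` and `ν(y)` are integer multiples
of `g`. -/
theorem value_of_X_is_gcd (K : Type*) [Field K] (ν : K → ℚ)
    (hν : ∀ a b : K, a ≠ 0 → b ≠ 0 → ν (a * b) = ν a + ν b)
    (x y : K) (hx : x ≠ 0) (hy : y ≠ 0) (hνx : 0 < ν x)
    (p q : ℕ) (hp : 0 < p) (hq : 0 < q) (hcop : Nat.Coprime p q)
    (hratio : ν y / ν x = (p : ℚ) / (q : ℚ))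
    (a b : ℕ) (hab : (a : ℤ) * (q : ℤ) - (b : ℤ) * (p : ℤ) = 1)
    (hap : a ≤ p) (hbq : b < q) :
    ν (x ^ a / y ^ b) = (1 / (q : ℚ)) * ν x ∧
    IsGreatest {g : ℚ | (∃ n : ℤ, ν x = (n : ℚ) * g) ∧ ∃ m : ℤ, ν y = (m : ℚ) * g}
      ((1 / (q : ℚ)) * ν x) := by
  have hone : ν 1 = 0 := by
    have := hν 1 1 one_ne_zero one_ne_zero
    simpa using this
  have hpow : ∀ (z : K), z ≠ 0 → ∀ n : ℕ, ν (z ^ n) = n * ν z := by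
    intro z hz n
    induction n with
    | zero => simpa using hone
    | succ k ih =>
        have : ν (z ^ k * z) = ν (z ^ k) + ν z := hν _ _ (pow_ne_zero _ hz) hz
        rw [pow_succ, this, ih]
        push_cast; ring
  have hdiv : ∀ (u v : K), u ≠ 0 → v ≠ 0 → ν (u / v) = ν u - ν v := by
    intro u v hu hv
    have : ν (u / v * v) = ν (u / v) + ν v :=
      hν _ _ (div_ne_zero hu hv) hv
    rw [div_mul_cancel₀ _ hv] at this
    linarith
  have hq0 : (q : ℚ) ≠ 0 := by positivity
  have hνx0 : ν x ≠ 0 := ne_of_gt hνx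
  have hνy : ν y = (p : ℚ) / (q : ℚ) * ν x := by
    field_simp at hratio
    field_simp
    linarith
  have hmain : ν (x ^ a / y ^ b) = (1 / (q : ℚ)) * ν x := by
    rw [hdiv _ _ (pow_ne_zero _ hx) (pow_ne_zero _ hy), hpow x hx, hpow y hy, hνy]
    have hab' : (a : ℚ) * q - b * p = 1 := by exact_mod_cast hab
    field_simp
    ring_nf
    ring_nf at hab'
    nlinarith [hab', hνx]
  refine ⟨hmain, ⟨⟨q, by field_simp; norm_cast⟩, ⟨p, by rw [hνy]; field_simp; norm_cast⟩⟩, ?_⟩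
  rintro g ⟨⟨n, hn⟩, ⟨m, hm⟩⟩
  have key : (1 / (q : ℚ)) * ν x = ((a * n - b * m : ℤ) : ℚ) * g := by
    have : (a : ℚ) * ν x - b * ν y = (1 / (q : ℚ)) * ν x := by
      rw [hνy]
      have hab' : (a : ℚ) * q - b * p = 1 := by exact_mod_cast hab
      field_simp
      nlinarith [hab']
    rw [← this, hn, hm]
    push_cast
    ring
  have hpos : 0 < (1 / (q : ℚ)) * ν x := by positivity
  rcases le_or_gt g 0 with hg | hg
  · linarith
  · have hk : (0 : ℚ) < ((a * n - b * m : ℤ) : ℚ) := by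
      by_contra h
      push_neg at h
      nlinarith [key, hpos, hg]
    have hk1 : (1 : ℚ) ≤ ((a * n - b * m : ℤ) : ℚ) := by
      exact_mod_cast (by exact_mod_cast hk : (0:ℤ) < a * n - b * m)
    nlinarith [key, hg]
end

section
/- Let (p̄_l, q̄_l), l ≥ 1, be coprime positive integers, Q̄_l = q̄_1⋯q̄_l, and define β̄_0 = 1, β̄_1 = p̄_1/q̄_1, β̄_{l+1} = q̄_l β̄_l + (1/Q̄_l)·(p̄_{l+1}/q̄_{l+1}). Then for all l ≥ 1: (i) gcd(β̄_0,…,β̄_l) = 1/Q̄_l and the subgroup ⟨β̄_0,…,β̄_l⟩ of ℚ equals (1/Q̄_l)ℤ; (ii) q̄_{l+1} β̄_{l+1} > β̄_{l+1} > q̄_l β̄_l whenever q̄_{l+1} > 1. -/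
private lemma Qprod_pos (q : ℕ → ℕ) (hq : ∀ i, 1 ≤ i → 0 < q i) (l : ℕ) :
    0 < ∏ j ∈ Finset.Icc 1 l, (q j : ℚ) := by
  apply Finset.prod_pos
  intro j hj
  exact_mod_cast hq j (Finset.mem_Icc.mp hj).1

/-- For the independent j-values `β̄_l`: (i) the gcd of `β̄_0, …, β̄_l` is `1/Q̄_l`
and the subgroup they generate is `(1/Q̄_l)ℤ`; (ii) whenever `q̄_{l+1} > 1`,
`q̄_{l+1} β̄_{l+1} > β̄_{l+1} > q̄_l β̄_l`. -/
theorem independent_jvalues_properties (p q : ℕ → ℕ) (β : ℕ → ℚ)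
    (hp : ∀ i, 1 ≤ i → 0 < p i) (hq : ∀ i, 1 ≤ i → 0 < q i)
    (hcop : ∀ i, 1 ≤ i → Nat.Coprime (p i) (q i))
    (hβ0 : β 0 = 1) (hβ1 : β 1 = (p 1 : ℚ) / (q 1 : ℚ))
    (hβ : ∀ i, 1 ≤ i →
      β (i + 1) = (q i : ℚ) * β i
        + (1 / ∏ j ∈ Finset.Icc 1 i, (q j : ℚ)) * ((p (i + 1) : ℚ) / (q (i + 1) : ℚ)))
    (l : ℕ) (hl : 1 ≤ l) :
    IsGreatest {g : ℚ | ∀ j ≤ l, ∃ n : ℤ, β j = (n : ℚ) * g}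
      (1 / ∏ j ∈ Finset.Icc 1 l, (q j : ℚ)) ∧
    (AddSubgroup.closure (β '' {j | j ≤ l}) : Set ℚ)
      = {x : ℚ | ∃ n : ℤ, x = (n : ℚ) * (1 / ∏ j ∈ Finset.Icc 1 l, (q j : ℚ))} ∧
    (1 < q (l + 1) →
      β (l + 1) < (q (l + 1) : ℚ) * β (l + 1) ∧ (q l : ℚ) * β l < β (l + 1)) := by
  have hq0 : ∀ i, 1 ≤ i → (0:ℚ) < q i := fun i hi => by exact_mod_cast hq i hi
  have hp0 : ∀ i, 1 ≤ i → (0:ℚ) < p i := fun i hi => by exact_mod_cast hp i hi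
  have hQpos := Qprod_pos q hq
  have bezout : ∀ i, 1 ≤ i → ∃ a b : ℤ, (p i : ℤ) * a + (q i : ℤ) * b = 1 := by
    intro i hi
    refine ⟨Nat.gcdA (p i) (q i), Nat.gcdB (p i) (q i), ?_⟩
    have h := Nat.gcd_eq_gcd_ab (p i) (q i)
    rw [hcop i hi] at h
    push_cast at h ⊢
    linarith
  -- the key subgroup computation
  have key : ∀ m, 1 ≤ m → AddSubgroup.closure (β '' {j | j ≤ m})
      = AddSubgroup.zmultiples (1 / ∏ j ∈ Finset.Icc 1 m, (q j : ℚ)) := by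
    intro m hm
    induction m, hm using Nat.le_induction with
    | base =>
      have hset : β '' {j | j ≤ 1} = {β 0, β 1} := by
        ext x
        simp only [Set.mem_image, Set.mem_setOf_eq, Set.mem_insert_iff,
          Set.mem_singleton_iff]
        constructor
        · rintro ⟨j, hj, rfl⟩
          interval_cases j
          · left; rfl
          · right; rfl
        · rintro (rfl | rfl)
          exacts [⟨0, by omega, rfl⟩, ⟨1, by omega, rfl⟩]
      have hQ1 : (∏ j ∈ Finset.Icc 1 1, (q j : ℚ)) = (q 1 : ℚ) := by simp
      rw [hset, hQ1]
      have hq1 : (q 1 : ℚ) ≠ 0 := ne_of_gt (hq0 1 le_rfl)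
      apply le_antisymm
      · rw [AddSubgroup.closure_le]
        rintro x (rfl | rfl)
        · refine ⟨(q 1 : ℤ), ?_⟩
          simp only [zsmul_eq_mul]
          rw [hβ0]
          push_cast
          field_simp
        · refine ⟨(p 1 : ℤ), ?_⟩
          simp only [zsmul_eq_mul]
          rw [hβ1]
          push_cast
          field_simp
      · rw [AddSubgroup.zmultiples_le]
        obtain ⟨a, b, hab⟩ := bezout 1 le_rfl
        have habQ : (p 1 : ℚ) * a + (q 1 : ℚ) * b = 1 := by exact_mod_cast hab
        have hx : (1:ℚ) / (q 1 : ℚ) = (b : ℚ) * β 0 + (a : ℚ) * β 1 := by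
          rw [hβ0, hβ1]
          field_simp
          linarith
        rw [hx]
        refine add_mem ?_ ?_
        · have : β 0 ∈ AddSubgroup.closure {β 0, β 1} :=
            AddSubgroup.subset_closure (by left; rfl)
          simpa [zsmul_eq_mul] using AddSubgroup.zsmul_mem _ this b
        · have : β 1 ∈ AddSubgroup.closure {β 0, β 1} :=
            AddSubgroup.subset_closure (by right; rfl)
          simpa [zsmul_eq_mul] using AddSubgroup.zsmul_mem _ this a
    | succ n hn IH =>
      have hQsucc : (∏ j ∈ Finset.Icc 1 (n+1), (q j : ℚ))
          = (∏ j ∈ Finset.Icc 1 n, (q j : ℚ)) * (q (n+1) : ℚ) :=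
        Finset.prod_Icc_succ_top (by omega) _
      set Qn : ℚ := ∏ j ∈ Finset.Icc 1 n, (q j : ℚ) with hQn
      have hQn0 : Qn ≠ 0 := ne_of_gt (hQpos n)
      have hqn1 : (q (n+1) : ℚ) ≠ 0 := ne_of_gt (hq0 (n+1) (by omega))
      have hsplit : β '' {j | j ≤ n+1} = β '' {j | j ≤ n} ∪ {β (n+1)} := by
        ext x
        simp only [Set.mem_image, Set.mem_setOf_eq, Set.mem_union, Set.mem_singleton_iff]
        constructor
        · rintro ⟨j, hj, rfl⟩
          by_cases h : j = n + 1
          · right; rw [h]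
          · left; exact ⟨j, by omega, rfl⟩
        · rintro (⟨j, hj, rfl⟩ | rfl)
          exacts [⟨j, by omega, rfl⟩, ⟨n+1, Nat.le_refl (n+1), rfl⟩]
      -- β n is an integer multiple of 1/Qn
      have hβn : β n ∈ AddSubgroup.zmultiples ((1:ℚ)/Qn) := by
        rw [← IH]
        exact AddSubgroup.subset_closure ⟨n, Nat.le_refl n, rfl⟩
      obtain ⟨A, hA⟩ := AddSubgroup.mem_zmultiples_iff.mp hβn
      rw [zsmul_eq_mul] at hA
      rw [hsplit, AddSubgroup.closure_union, IH, ← AddSubgroup.zmultiples_eq_closure,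
        hQsucc]
      apply le_antisymm
      · apply sup_le
        · rw [AddSubgroup.zmultiples_le]
          refine ⟨(q (n+1) : ℤ), ?_⟩
          simp only [zsmul_eq_mul]
          push_cast
          field_simp
        · rw [AddSubgroup.zmultiples_le]
          refine ⟨(q (n+1) : ℤ) * (q n : ℤ) * A + (p (n+1) : ℤ), ?_⟩
          simp only [zsmul_eq_mul]
          rw [hβ n hn, ← hQn, ← hA]
          push_cast
          field_simp
      · rw [AddSubgroup.zmultiples_le]
        obtain ⟨a, b, hab⟩ := bezout (n+1) (by omega)
        have habQ : (p (n+1) : ℚ) * a + (q (n+1) : ℚ) * b = 1 := by exact_mod_cast hab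
        have hx : (1:ℚ) / (Qn * (q (n+1) : ℚ))
            = (b : ℚ) * ((1:ℚ)/Qn) + (a : ℚ) * β (n+1) + (-(a * (q n : ℤ)) : ℤ) * β n := by
          rw [hβ n hn, ← hQn]
          push_cast
          field_simp
          linear_combination (-1) * habQ
        rw [hx]
        have h1 : ((1:ℚ)/Qn) ∈ AddSubgroup.zmultiples ((1:ℚ)/Qn) ⊔
            AddSubgroup.zmultiples (β (n+1)) :=
          SetLike.le_def.mp le_sup_left (AddSubgroup.mem_zmultiples _)
        have h2 : β (n+1) ∈ AddSubgroup.zmultiples ((1:ℚ)/Qn) ⊔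
            AddSubgroup.zmultiples (β (n+1)) :=
          SetLike.le_def.mp le_sup_right (AddSubgroup.mem_zmultiples _)
        have h3 : β n ∈ AddSubgroup.zmultiples ((1:ℚ)/Qn) ⊔
            AddSubgroup.zmultiples (β (n+1)) :=
          SetLike.le_def.mp le_sup_left hβn
        refine add_mem (add_mem ?_ ?_) ?_
        · simpa [zsmul_eq_mul] using AddSubgroup.zsmul_mem _ h1 b
        · simpa [zsmul_eq_mul] using AddSubgroup.zsmul_mem _ h2 a
        · simpa [zsmul_eq_mul] using AddSubgroup.zsmul_mem _ h3 (-(a * (q n : ℤ)))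
  set QL : ℚ := ∏ j ∈ Finset.Icc 1 l, (q j : ℚ) with hQL
  have hQL0 : 0 < QL := hQpos l
  have keyl := key l hl
  refine ⟨⟨?_, ?_⟩, ?_, ?_⟩
  · -- membership: every β j, j ≤ l, is an integer multiple of 1/QL
    intro j hj
    have : β j ∈ AddSubgroup.zmultiples ((1:ℚ)/QL) := by
      rw [← keyl]
      exact AddSubgroup.subset_closure ⟨j, hj, rfl⟩
    obtain ⟨n, hn⟩ := AddSubgroup.mem_zmultiples_iff.mp this
    exact ⟨n, by rw [← hn, zsmul_eq_mul]⟩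
  · -- upper bound
    intro g hg
    have hle : AddSubgroup.closure (β '' {j | j ≤ l}) ≤ AddSubgroup.zmultiples g := by
      rw [AddSubgroup.closure_le]
      rintro x ⟨j, hj, rfl⟩
      obtain ⟨n, hn⟩ := hg j hj
      exact ⟨n, by simp only [zsmul_eq_mul]; exact hn.symm⟩
    have : (1:ℚ)/QL ∈ AddSubgroup.zmultiples g := by
      apply hle
      rw [keyl]
      exact AddSubgroup.mem_zmultiples _
    obtain ⟨m, hm⟩ := AddSubgroup.mem_zmultiples_iff.mp this
    rw [zsmul_eq_mul] at hm
    rcases le_or_gt g 0 with hg0 | hg0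
    · have : (0:ℚ) < 1/QL := by positivity
      linarith
    · have hmpos : (0:ℚ) < m := by
        by_contra h
        push_neg at h
        have : (m:ℚ) * g ≤ 0 := mul_nonpos_of_nonpos_of_nonneg h (le_of_lt hg0)
        have : (0:ℚ) < 1/QL := by positivity
        linarith
      have : (0:ℤ) < m := by exact_mod_cast hmpos
      have h1m : (1:ℚ) ≤ (m:ℚ) := by exact_mod_cast this
      calc g = 1 * g := (one_mul g).symm
        _ ≤ (m:ℚ) * g := by nlinarith
        _ = 1/QL := hm
  · -- the subgroup equality as sets
    rw [keyl]
    ext x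
    simp only [SetLike.mem_coe, AddSubgroup.mem_zmultiples_iff, zsmul_eq_mul,
      Set.mem_setOf_eq]
    exact ⟨fun ⟨k, hk⟩ => ⟨k, hk.symm⟩, fun ⟨k, hk⟩ => ⟨k, hk.symm⟩⟩
  · -- part (ii)
    intro hq1
    have hpos : ∀ i, 0 < β i := by
      intro i
      induction i with
      | zero => rw [hβ0]; norm_num
      | succ n ih =>
        rcases Nat.eq_zero_or_pos n with rfl | hn
        · rw [hβ1]
          exact div_pos (hp0 1 le_rfl) (hq0 1 le_rfl)
        · rw [hβ n hn]
          have h1 : (0:ℚ) < (q n : ℚ) * β n := mul_pos (hq0 n hn) ih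
          have h2 : (0:ℚ) < (1 / ∏ j ∈ Finset.Icc 1 n, (q j : ℚ))
              * ((p (n+1) : ℚ) / (q (n+1) : ℚ)) := by
            have := hQpos n
            have := hp0 (n+1) (by omega)
            have := hq0 (n+1) (by omega)
            positivity
          linarith
    have hterm : (0:ℚ) < (1 / QL) * ((p (l+1) : ℚ) / (q (l+1) : ℚ)) := by
      have := hp0 (l+1) (by omega)
      have := hq0 (l+1) (by omega)
      positivity
    have h2 : (q l : ℚ) * β l < β (l+1) := by
      rw [hβ l hl, ← hQL]
      linarith
    have hq2 : (2:ℚ) ≤ (q (l+1) : ℚ) := by exact_mod_cast hq1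
    have hb : 0 < β (l+1) := hpos (l+1)
    exact ⟨by nlinarith, h2⟩
end
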